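/- Fix μ in the probability simplex Δ^{m−1}. Let x_1,...,x_n be i.i.d. random coordinate vectors with Pr[x = e_i] = μ_i, and μ̂ := (1/n)Σ x_i. Then for all t > 0, Pr[‖μ̂ − μ‖₂ > (1+√t)/√n] ≤ e^{−t}. -/

import Mathlib

open Real

namespace Stmt17

lemma D_pos {q : ℝ} (hq0 : 0 ≤ q) (hq1 : q ≤ 1) (h : ℝ) :
    0 < 1 - q + q * Real.exp h := by
  rcases eq_or_lt_of_le hq1 with h1 | h1
  · subst h1; simpa using Real.exp_pos h
  · have : 0 ≤ q * Real.exp h := mul_nonneg hq0 (Real.exp_pos h).le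
    linarith

noncomputable def uu (q h : ℝ) : ℝ := q * Real.exp h / (1 - q + q * Real.exp h)

lemma hasDerivAt_uu {q : ℝ} (hq0 : 0 ≤ q) (hq1 : q ≤ 1) (h : ℝ) :
    HasDerivAt (uu q) (uu q h * (1 - uu q h)) h := by
  have hD := D_pos hq0 hq1 h
  have hN : HasDerivAt (fun h => q * Real.exp h) (q * Real.exp h) h :=
    (Real.hasDerivAt_exp h).const_mul q
  have hDd : HasDerivAt (fun h => 1 - q + q * Real.exp h) (q * Real.exp h) h :=
    hN.const_add (1 - q)
  have := hN.div hDd hD.ne'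
  refine this.congr_deriv ?_
  unfold uu
  field_simp <;> ring

lemma uu_deriv_le {q : ℝ} (hq0 : 0 ≤ q) (hq1 : q ≤ 1) (h : ℝ) :
    uu q h * (1 - uu q h) ≤ 1 / 4 := by nlinarith [sq_nonneg (uu q h - 1/2)]

noncomputable def FF (q h : ℝ) : ℝ := Real.log (1 - q + q * Real.exp h) - q * h

lemma hasDerivAt_FF {q : ℝ} (hq0 : 0 ≤ q) (hq1 : q ≤ 1) (h : ℝ) :
    HasDerivAt (FF q) (uu q h - q) h := by
  have hD := D_pos hq0 hq1 h
  have hDd : HasDerivAt (fun h => 1 - q + q * Real.exp h) (q * Real.exp h) h :=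
    ((Real.hasDerivAt_exp h).const_mul q).const_add (1 - q)
  have hlog := hDd.log hD.ne'
  have hqh : HasDerivAt (fun h : ℝ => q * h) q h := by
    simpa using (hasDerivAt_id h).const_mul q
  exact hlog.sub hqh

noncomputable def GG (q h : ℝ) : ℝ := h / 4 - (uu q h - q)

lemma hasDerivAt_GG {q : ℝ} (hq0 : 0 ≤ q) (hq1 : q ≤ 1) (h : ℝ) :
    HasDerivAt (GG q) (1 / 4 - uu q h * (1 - uu q h)) h := by
  have h1 : HasDerivAt (fun h : ℝ => h / 4) (1 / 4) h := (hasDerivAt_id h).div_const 4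
  exact h1.sub ((hasDerivAt_uu hq0 hq1 h).sub_const q)

lemma GG_zero {q : ℝ} (hq0 : 0 ≤ q) (hq1 : q ≤ 1) : GG q 0 = 0 := by
  simp [GG, uu]

lemma GG_mono {q : ℝ} (hq0 : 0 ≤ q) (hq1 : q ≤ 1) : Monotone (GG q) := by
  apply monotone_of_deriv_nonneg
  · exact fun h => (hasDerivAt_GG hq0 hq1 h).differentiableAt
  · intro h
    rw [(hasDerivAt_GG hq0 hq1 h).deriv]
    have := uu_deriv_le hq0 hq1 h
    linarith

lemma FF_zero {q : ℝ} : FF q 0 = 0 := by simp [FF]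

lemma FF_le {q : ℝ} (hq0 : 0 ≤ q) (hq1 : q ≤ 1) (h : ℝ) : FF q h ≤ h ^ 2 / 8 := by
  -- consider H h = h^2/8 - FF q h, H' = GG, H 0 = 0
  set H : ℝ → ℝ := fun h => h ^ 2 / 8 - FF q h with hH
  have hder : ∀ h, HasDerivAt H (GG q h) h := by
    intro h
    have h1 : HasDerivAt (fun h : ℝ => h ^ 2 / 8) (h / 4) h := by
      have := (hasDerivAt_pow 2 h).div_const 8
      exact this.congr_deriv (by norm_num <;> ring)
    have := h1.sub (hasDerivAt_FF hq0 hq1 h)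
    exact this
  have hH0 : H 0 = 0 := by simp [hH, FF_zero]
  have key : 0 ≤ H h := by
    rcases le_or_gt 0 h with hh | hh
    · have mono : MonotoneOn H (Set.Ici (0:ℝ)) := by
        apply monotoneOn_of_deriv_nonneg (convex_Ici 0)
        · exact (Continuous.continuousOn (by
            have : Differentiable ℝ H := fun h => (hder h).differentiableAt
            exact this.continuous))
        · intro x hx
          exact ((hder x).differentiableAt).differentiableWithinAt
        · intro x hx
          rw [(hder x).deriv]
          have h0 : GG q 0 ≤ GG q x := GG_mono hq0 hq1 (le_of_lt (by simpa using hx))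
          simpa [GG_zero hq0 hq1] using h0
      have := mono (Set.self_mem_Ici) (Set.mem_Ici.2 hh) hh
      simpa [hH0] using this
    · have anti : AntitoneOn H (Set.Iic (0:ℝ)) := by
        apply antitoneOn_of_deriv_nonpos (convex_Iic 0)
        · exact (Continuous.continuousOn (by
            have : Differentiable ℝ H := fun h => (hder h).differentiableAt
            exact this.continuous))
        · intro x hx
          exact ((hder x).differentiableAt).differentiableWithinAt
        · intro x hx
          rw [(hder x).deriv]
          have h0 : GG q x ≤ GG q 0 := GG_mono hq0 hq1 (le_of_lt (by simpa using hx))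
          simpa [GG_zero hq0 hq1] using h0
      have := anti (Set.mem_Iic.2 hh.le) (Set.self_mem_Iic) hh.le
      simpa [hH0] using this
  simpa [hH] using key

/-- Core Hoeffding inequality. -/
lemma hoeff_core {q : ℝ} (hq0 : 0 ≤ q) (hq1 : q ≤ 1) (h : ℝ) :
    (1 - q) * Real.exp (-(q * h)) + q * Real.exp ((1 - q) * h) ≤ Real.exp (h ^ 2 / 8) := by
  have hD := D_pos hq0 hq1 h
  have hLHS : (1 - q) * Real.exp (-(q * h)) + q * Real.exp ((1 - q) * h)
      = Real.exp (FF q h) := by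
    rw [FF, Real.exp_sub, Real.exp_log hD]
    rw [show (1 - q) * h = h - q * h by ring, Real.exp_sub]
    field_simp [Real.exp_ne_zero]
    first | simp [mul_assoc, ← Real.exp_add] | (simp [mul_assoc, ← Real.exp_add]; ring)
  rw [hLHS]
  exact Real.exp_le_exp.2 (FF_le hq0 hq1 h)

/-- Hoeffding's lemma for a finitely supported distribution. -/
lemma hoeff_dist {ι : Type*} [Fintype ι] [Nonempty ι] (p : ι → ℝ)
    (hp0 : ∀ i, 0 ≤ p i) (hp1 : ∑ i, p i = 1) (g : ι → ℝ) (a b lam : ℝ)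
    (ha : ∀ i, a ≤ g i) (hb : ∀ i, g i ≤ b) :
    ∑ i, p i * Real.exp (lam * g i) ≤
      Real.exp (lam * (∑ i, p i * g i) + lam ^ 2 * (b - a) ^ 2 / 8) := by
  obtain ⟨i0⟩ := ‹Nonempty ι›
  have hab : a ≤ b := le_trans (ha i0) (hb i0)
  set μ : ℝ := ∑ i, p i * g i with hμ
  have hμa : a ≤ μ := by
    calc a = ∑ i, p i * a := by rw [← Finset.sum_mul, hp1, one_mul]
    _ ≤ μ := Finset.sum_le_sum fun i _ => mul_le_mul_of_nonneg_left (ha i) (hp0 i)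
  have hμb : μ ≤ b := by
    calc μ ≤ ∑ i, p i * b := Finset.sum_le_sum fun i _ => mul_le_mul_of_nonneg_left (hb i) (hp0 i)
    _ = b := by rw [← Finset.sum_mul, hp1, one_mul]
  rcases eq_or_lt_of_le hab with he | hlt
  · -- a = b : all g i equal a, μ = a
    subst he
    have hg : ∀ i, g i = a := fun i => le_antisymm (hb i) (ha i)
    have : ∑ i, p i * Real.exp (lam * g i) = Real.exp (lam * a) := by
      simp only [hg]
      rw [← Finset.sum_mul, hp1, one_mul]
    rw [this]
    have hμ' : μ = a := le_antisymm hμb hμa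
    rw [hμ']
    apply Real.exp_le_exp.2
    nlinarith [sq_nonneg (lam * (a - a))]
  · set q : ℝ := (μ - a) / (b - a) with hq
    have hba : (0:ℝ) < b - a := sub_pos.2 hlt
    have hq0 : 0 ≤ q := div_nonneg (by linarith) hba.le
    have hq1 : q ≤ 1 := by
      rw [div_le_one hba]; linarith
    -- pointwise convexity bound
    have hpt : ∀ i, Real.exp (lam * g i) ≤
        (b - g i) / (b - a) * Real.exp (lam * a) + (g i - a) / (b - a) * Real.exp (lam * b) := by
      intro i
      have w1 : (0:ℝ) ≤ (b - g i) / (b - a) := div_nonneg (by linarith [hb i]) hba.le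
      have w2 : (0:ℝ) ≤ (g i - a) / (b - a) := div_nonneg (by linarith [ha i]) hba.le
      have wsum : (b - g i) / (b - a) + (g i - a) / (b - a) = 1 := by
        field_simp <;> ring
      have := convexOn_exp.2 (Set.mem_univ (lam * a)) (Set.mem_univ (lam * b)) w1 w2 wsum
      simp only [smul_eq_mul] at this
      have harg : (b - g i) / (b - a) * (lam * a) + (g i - a) / (b - a) * (lam * b)
          = lam * g i := by field_simp; ring
      rw [harg] at this
      exact this
    have hsum : ∑ i, p i * Real.exp (lam * g i) ≤
        (b - μ) / (b - a) * Real.exp (lam * a) + (μ - a) / (b - a) * Real.exp (lam * b) := by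
      calc ∑ i, p i * Real.exp (lam * g i)
          ≤ ∑ i, p i * ((b - g i) / (b - a) * Real.exp (lam * a)
              + (g i - a) / (b - a) * Real.exp (lam * b)) :=
            Finset.sum_le_sum fun i _ => mul_le_mul_of_nonneg_left (hpt i) (hp0 i)
        _ = (b - μ) / (b - a) * Real.exp (lam * a) + (μ - a) / (b - a) * Real.exp (lam * b) := by
            rw [Finset.sum_congr rfl (fun i _ => by ring :
              ∀ i ∈ Finset.univ, p i * ((b - g i) / (b - a) * Real.exp (lam * a)
                + (g i - a) / (b - a) * Real.exp (lam * b))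
              = (p i * b - p i * g i) * ((b-a)⁻¹ * Real.exp (lam * a))
                + (p i * g i - p i * a) * ((b-a)⁻¹ * Real.exp (lam * b)))]
            rw [Finset.sum_add_distrib, ← Finset.sum_mul, ← Finset.sum_mul]
            rw [Finset.sum_sub_distrib, Finset.sum_sub_distrib, ← Finset.sum_mul, ← Finset.sum_mul, hp1]
            rw [← hμ]
            field_simp
            try ring
    set h : ℝ := lam * (b - a) with hh
    have hcore := hoeff_core hq0 hq1 h
    have h1q : (1 : ℝ) - q = (b - μ) / (b - a) := by
      rw [hq, eq_div_iff hba.ne', sub_mul, div_mul_cancel₀ _ hba.ne']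
      ring
    have e1 : lam * a = lam * μ + (-(q * h)) := by
      rw [hq, hh]; field_simp; ring
    have e2 : lam * b = lam * μ + ((1 - q) * h) := by
      rw [hq, hh]; field_simp; ring
    calc ∑ i, p i * Real.exp (lam * g i)
        ≤ (b - μ) / (b - a) * Real.exp (lam * a) + (μ - a) / (b - a) * Real.exp (lam * b) := hsum
      _ = Real.exp (lam * μ) * ((1 - q) * Real.exp (-(q * h)) + q * Real.exp ((1 - q) * h)) := by
          rw [e1, e2, Real.exp_add, Real.exp_add, h1q, hq]; ring
      _ ≤ Real.exp (lam * μ) * Real.exp (h ^ 2 / 8) :=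
          mul_le_mul_of_nonneg_left hcore (Real.exp_pos _).le
      _ = Real.exp (lam * μ + lam ^ 2 * (b - a) ^ 2 / 8) := by
          rw [← Real.exp_add, hh]; ring_nf

section Product
open Finset

variable {m : ℕ} (p : Fin m → ℝ)

/-- product weight -/
def W {N : ℕ} (a : Fin N → Fin m) : ℝ := ∏ j, p (a j)

lemma W_nonneg (hp0 : ∀ i, 0 ≤ p i) {N : ℕ} (a : Fin N → Fin m) : 0 ≤ W p a :=
  Finset.prod_nonneg fun j _ => hp0 (a j)

lemma sum_cons {N : ℕ} (F : (Fin (N+1) → Fin m) → ℝ) :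
    ∑ a : Fin (N+1) → Fin m, F a = ∑ i : Fin m, ∑ a' : Fin N → Fin m, F (Fin.cons i a') := by
  rw [← (Fin.consEquiv (fun _ => Fin m)).sum_comp, Fintype.sum_prod_type]
  rfl

lemma W_cons {N : ℕ} (i : Fin m) (a' : Fin N → Fin m) :
    W p (Fin.cons i a') = p i * W p a' := by
  unfold W
  rw [Fin.prod_univ_succ]
  simp

lemma Ex_factor {N : ℕ} (G : Fin N → Fin m → ℝ) :
    ∑ a : Fin N → Fin m, ∏ j, (p (a j) * G j (a j)) = ∏ j, ∑ x, p x * G j x := by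
  rw [Finset.prod_univ_sum (fun _ : Fin N => (univ : Finset (Fin m)))
    (fun j x => p x * G j x), Fintype.piFinset_univ]

variable (hp0 : ∀ i, 0 ≤ p i) (hp1 : ∑ i, p i = 1)

include hp1 in
lemma sum_W {N : ℕ} : ∑ a : Fin N → Fin m, W p a = 1 := by
  have h := Ex_factor p (fun (_ : Fin N) (_ : Fin m) => (1:ℝ))
  simp only [mul_one] at h
  unfold W
  rw [h, hp1, Finset.prod_const_one]

include hp1 in
lemma Ex_single {N : ℕ} (j : Fin N) (g : Fin m → ℝ) :
    ∑ a : Fin N → Fin m, W p a * g (a j) = ∑ x, p x * g x := by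
  have key : ∀ a : Fin N → Fin m,
      W p a * g (a j) = ∏ j', (p (a j') * (if j' = j then g (a j') else 1)) := by
    intro a
    rw [Finset.prod_mul_distrib, Finset.prod_ite_eq']
    simp [W]
  rw [Finset.sum_congr rfl fun a _ => key a,
    Ex_factor p (fun j' x => if j' = j then g x else 1)]
  have fac : ∀ j' : Fin N, (∑ x, p x * (if j' = j then g x else 1))
      = if j' = j then (∑ x, p x * g x) else 1 := by
    intro j'
    split_ifs with h <;> simp [hp1]
  rw [Finset.prod_congr rfl fun j' _ => fac j', Finset.prod_ite_eq']
  simp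

include hp1 in
lemma Ex_pair {N : ℕ} {j k : Fin N} (hjk : j ≠ k) (g h : Fin m → ℝ) :
    ∑ a : Fin N → Fin m, W p a * (g (a j) * h (a k))
      = (∑ x, p x * g x) * (∑ x, p x * h x) := by
  have key : ∀ a : Fin N → Fin m,
      W p a * (g (a j) * h (a k)) = ∏ j', (p (a j') *
        ((if j' = j then g (a j') else 1) * (if j' = k then h (a j') else 1))) := by
    intro a
    rw [Finset.prod_mul_distrib, Finset.prod_mul_distrib, Finset.prod_ite_eq',
      Finset.prod_ite_eq']
    simp [W]
  rw [Finset.sum_congr rfl fun a _ => key a,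
    Ex_factor p (fun j' x => (if j' = j then g x else 1) * (if j' = k then h x else 1))]
  have fac : ∀ j' : Fin N, (∑ x, p x * ((if j' = j then g x else 1) * (if j' = k then h x else 1)))
      = (if j' = j then (∑ x, p x * g x) else 1) * (if j' = k then (∑ x, p x * h x) else 1) := by
    intro j'
    rcases eq_or_ne j' j with rfl | h1
    · simp [hjk]
    · rcases eq_or_ne j' k with rfl | h2
      · simp [h1]
      · simp [h1, h2, hp1]
  rw [Finset.prod_congr rfl fun j' _ => fac j', Finset.prod_mul_distrib,
    Finset.prod_ite_eq', Finset.prod_ite_eq']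
  simp

include hp1 in
lemma Ex_sq_sum {N : ℕ} (d : Fin m → ℝ) (hd : ∑ x, p x * d x = 0) :
    ∑ a : Fin N → Fin m, W p a * (∑ j, d (a j)) ^ 2
      = N * (∑ x, p x * d x ^ 2) := by
  have expand : ∀ a : Fin N → Fin m,
      W p a * (∑ j, d (a j)) ^ 2 = ∑ j, ∑ k, W p a * (d (a j) * d (a k)) := by
    intro a
    rw [sq, Finset.sum_mul_sum]
    rw [Finset.mul_sum]
    exact Finset.sum_congr rfl fun j _ => by rw [Finset.mul_sum]
  rw [Finset.sum_congr rfl fun a _ => expand a, Finset.sum_comm]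
  have inner : ∀ j k : Fin N, (∑ a : Fin N → Fin m, W p a * (d (a j) * d (a k)))
      = if k = j then (∑ x, p x * d x ^ 2) else 0 := by
    intro j k
    rcases eq_or_ne k j with rfl | hjk
    · rw [if_pos rfl]
      have h1 : ∑ a : Fin N → Fin m, W p a * (d (a k) * d (a k)) = ∑ x, p x * (d x * d x) :=
        Ex_single p hp1 k (fun x => d x * d x)
      calc ∑ a : Fin N → Fin m, W p a * (d (a k) * d (a k)) = ∑ x, p x * (d x * d x) := h1
        _ = ∑ x, p x * d x ^ 2 := Finset.sum_congr rfl fun x _ => by ring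
    · rw [if_neg hjk, Ex_pair p hp1 (Ne.symm hjk), hd]
      ring
  calc ∑ j : Fin N, ∑ a : Fin N → Fin m, ∑ k, W p a * (d (a j) * d (a k))
      = ∑ j : Fin N, ∑ k : Fin N, ∑ a : Fin N → Fin m, W p a * (d (a j) * d (a k)) := by
        exact Finset.sum_congr rfl fun j _ => Finset.sum_comm
    _ = ∑ j : Fin N, ∑ k : Fin N, if k = j then (∑ x, p x * d x ^ 2) else 0 := by
        exact Finset.sum_congr rfl fun j _ => Finset.sum_congr rfl fun k _ => inner j k
    _ = ∑ j : Fin N, (∑ x, p x * d x ^ 2) := by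
        exact Finset.sum_congr rfl fun j _ => by rw [Finset.sum_ite_eq' univ j]; simp
    _ = N * (∑ x, p x * d x ^ 2) := by
        rw [Finset.sum_const, Finset.card_univ, Fintype.card_fin, nsmul_eq_mul]

include hp0 hp1 in
/-- McDiarmid MGF bound on the finite product space. -/
lemma mgf_bound (B lam : ℝ) : ∀ (N : ℕ) (f : (Fin N → Fin m) → ℝ),
    (∀ (a : Fin N → Fin m) (j : Fin N) (i1 i2 : Fin m),
      f (Function.update a j i1) - f (Function.update a j i2) ≤ B) →
    ∑ a : Fin N → Fin m, W p a * Real.exp (lam * f a)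
      ≤ Real.exp (lam * (∑ a : Fin N → Fin m, W p a * f a) + N * (lam ^ 2 * B ^ 2 / 8)) := by
  intro N
  induction N with
  | zero =>
    intro f _
    have hu : ∀ (g : (Fin 0 → Fin m) → ℝ), ∑ a : Fin 0 → Fin m, g a = g default := by
      intro g; exact Fintype.sum_unique g
    rw [hu, hu]
    have hW : W p (default : Fin 0 → Fin m) = 1 := by
      simp [W]
    rw [hW]
    simp
  | succ N ih =>
    intro f hosc
    have hm : Nonempty (Fin m) := by
      by_contra hne
      rw [not_nonempty_iff] at hne
      rw [Finset.univ_eq_empty, Finset.sum_empty] at hp1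
      exact one_ne_zero hp1.symm
    set g : (Fin N → Fin m) → ℝ := fun a' => ∑ i, p i * f (Fin.cons i a') with hg
    -- osc bound for g
    have hoscg : ∀ (a : Fin N → Fin m) (j : Fin N) (i1 i2 : Fin m),
        g (Function.update a j i1) - g (Function.update a j i2) ≤ B := by
      intro a j i1 i2
      rw [hg]
      simp only
      rw [← Finset.sum_sub_distrib]
      calc ∑ i, (p i * f (Fin.cons i (Function.update a j i1))
              - p i * f (Fin.cons i (Function.update a j i2)))
          = ∑ i, p i * (f (Function.update (Fin.cons i a) j.succ i1)
              - f (Function.update (Fin.cons i a) j.succ i2)) := by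
            refine Finset.sum_congr rfl fun i _ => ?_
            rw [Fin.cons_update, Fin.cons_update]
            ring
        _ ≤ ∑ i, p i * B :=
            Finset.sum_le_sum fun i _ => mul_le_mul_of_nonneg_left (hosc _ _ _ _) (hp0 i)
        _ = B := by rw [← Finset.sum_mul, hp1, one_mul]
    -- per-fiber Hoeffding
    have fiber : ∀ a' : Fin N → Fin m,
        ∑ i, p i * Real.exp (lam * f (Fin.cons i a'))
          ≤ Real.exp (lam * g a' + lam ^ 2 * B ^ 2 / 8) := by
      intro a'
      set lo : ℝ := Finset.univ.inf' (Finset.univ_nonempty) (fun i => f (Fin.cons i a'))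
      set hi : ℝ := Finset.univ.sup' (Finset.univ_nonempty) (fun i => f (Fin.cons i a'))
      obtain ⟨ib, _, hib⟩ := Finset.exists_mem_eq_sup' (Finset.univ_nonempty)
        (fun i => f (Fin.cons i a'))
      obtain ⟨ia, _, hia⟩ := Finset.exists_mem_eq_inf' (Finset.univ_nonempty)
        (fun i => f (Fin.cons i a'))
      have hlo : ∀ i, lo ≤ f (Fin.cons i a') := fun i =>
        Finset.inf'_le (fun i => f (Fin.cons i a')) (Finset.mem_univ i)
      have hhi : ∀ i, f (Fin.cons i a') ≤ hi := fun i =>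
        Finset.le_sup' (fun i => f (Fin.cons i a')) (Finset.mem_univ i)
      have hrange : hi - lo ≤ B := by
        have hib' : hi = f (Fin.cons ib a') := hib
        have hia' : lo = f (Fin.cons ia a') := hia
        rw [hib', hia']
        have h1 : f (Fin.cons ib a') = f (Function.update (Fin.cons ia a') 0 ib) := by
          rw [Fin.update_cons_zero]
        have h2 : f (Fin.cons ia a') = f (Function.update (Fin.cons ia a') 0 ia) := by
          rw [Fin.update_cons_zero]
        rw [h1, h2]
        exact hosc _ _ _ _
      have hrange0 : 0 ≤ hi - lo := by
        have := le_trans (hlo ia) (hhi ia); linarith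
      have := hoeff_dist p hp0 hp1 (fun i => f (Fin.cons i a')) lo hi lam hlo hhi
      refine le_trans this (Real.exp_le_exp.2 ?_)
      have : (hi - lo) ^ 2 ≤ B ^ 2 := by
        have hB : hi - lo ≤ B := hrange
        nlinarith
      have h8 : lam ^ 2 * (hi - lo) ^ 2 / 8 ≤ lam ^ 2 * B ^ 2 / 8 := by
        have : lam ^ 2 * (hi - lo) ^ 2 ≤ lam ^ 2 * B ^ 2 :=
          mul_le_mul_of_nonneg_left this (sq_nonneg lam)
        linarith
      exact add_le_add (le_refl _) h8
    -- Ex over N+1 = Ex of g over N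
    have hEx : ∑ a : Fin (N+1) → Fin m, W p a * f a
        = ∑ a' : Fin N → Fin m, W p a' * g a' := by
      rw [sum_cons (fun a => W p a * f a), Finset.sum_comm]
      refine Finset.sum_congr rfl fun a' _ => ?_
      rw [hg]
      simp only
      rw [Finset.mul_sum]
      refine Finset.sum_congr rfl fun i _ => ?_
      rw [W_cons]
      ring
    calc ∑ a : Fin (N+1) → Fin m, W p a * Real.exp (lam * f a)
        = ∑ a' : Fin N → Fin m, W p a' * ∑ i, p i * Real.exp (lam * f (Fin.cons i a')) := by
          rw [sum_cons (fun a => W p a * Real.exp (lam * f a)), Finset.sum_comm]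
          refine Finset.sum_congr rfl fun a' _ => ?_
          rw [Finset.mul_sum]
          refine Finset.sum_congr rfl fun i _ => ?_
          rw [W_cons]
          ring
      _ ≤ ∑ a' : Fin N → Fin m, W p a' * Real.exp (lam * g a' + lam ^ 2 * B ^ 2 / 8) :=
          Finset.sum_le_sum fun a' _ =>
            mul_le_mul_of_nonneg_left (fiber a') (W_nonneg p hp0 a')
      _ = Real.exp (lam ^ 2 * B ^ 2 / 8) *
            ∑ a' : Fin N → Fin m, W p a' * Real.exp (lam * g a') := by
          rw [Finset.mul_sum]
          refine Finset.sum_congr rfl fun a' _ => ?_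
          rw [Real.exp_add]
          ring
      _ ≤ Real.exp (lam ^ 2 * B ^ 2 / 8) *
            Real.exp (lam * (∑ a' : Fin N → Fin m, W p a' * g a') + N * (lam ^ 2 * B ^ 2 / 8)) :=
          mul_le_mul_of_nonneg_left (ih g hoscg) (Real.exp_pos _).le
      _ = Real.exp (lam * (∑ a : Fin (N+1) → Fin m, W p a * f a)
            + (N + 1 : ℕ) * (lam ^ 2 * B ^ 2 / 8)) := by
          rw [← Real.exp_add, hEx]
          push_cast
          ring_nf

include hp0 hp1 in
/-- Chernoff step. -/
lemma chernoff (B lam c : ℝ) (hlam : 0 ≤ lam) (N : ℕ) (f : (Fin N → Fin m) → ℝ)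
    (hosc : ∀ (a : Fin N → Fin m) (j : Fin N) (i1 i2 : Fin m),
      f (Function.update a j i1) - f (Function.update a j i2) ≤ B) :
    ∑ a ∈ Finset.univ.filter (fun a : Fin N → Fin m => c < f a), W p a
      ≤ Real.exp (lam * ((∑ a : Fin N → Fin m, W p a * f a) - c) + N * (lam ^ 2 * B ^ 2 / 8)) := by
  have pt : ∀ a ∈ Finset.univ.filter (fun a : Fin N → Fin m => c < f a),
      W p a ≤ W p a * Real.exp (lam * (f a - c)) := by
    intro a ha
    rw [Finset.mem_filter] at ha
    have h0 : (0:ℝ) ≤ lam * (f a - c) := mul_nonneg hlam (by linarith [ha.2])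
    have h1 : (1:ℝ) ≤ Real.exp (lam * (f a - c)) :=
      le_trans (by linarith) (Real.add_one_le_exp _)
    nlinarith [W_nonneg p hp0 a]
  calc ∑ a ∈ Finset.univ.filter (fun a : Fin N → Fin m => c < f a), W p a
      ≤ ∑ a ∈ Finset.univ.filter (fun a : Fin N → Fin m => c < f a),
          W p a * Real.exp (lam * (f a - c)) := Finset.sum_le_sum pt
    _ ≤ ∑ a : Fin N → Fin m, W p a * Real.exp (lam * (f a - c)) :=
        Finset.sum_le_sum_of_subset_of_nonneg (Finset.filter_subset _ _)
          (fun a _ _ => mul_nonneg (W_nonneg p hp0 a) (Real.exp_pos _).le)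
    _ = Real.exp (-(lam * c)) * ∑ a : Fin N → Fin m, W p a * Real.exp (lam * f a) := by
        rw [Finset.mul_sum]
        refine Finset.sum_congr rfl fun a _ => ?_
        rw [show lam * (f a - c) = lam * f a + (-(lam * c)) by ring, Real.exp_add]
        ring
    _ ≤ Real.exp (-(lam * c)) * Real.exp (lam * (∑ a : Fin N → Fin m, W p a * f a)
          + N * (lam ^ 2 * B ^ 2 / 8)) :=
        mul_le_mul_of_nonneg_left (mgf_bound p hp0 hp1 B lam N f hosc) (Real.exp_pos _).le
    _ = Real.exp (lam * ((∑ a : Fin N → Fin m, W p a * f a) - c)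
          + N * (lam ^ 2 * B ^ 2 / 8)) := by
        rw [← Real.exp_add]
        congr 1
        ring
end Product

section Vnorm

/-- local copy of vnorm -/
noncomputable def vnorm' {n : ℕ} (v : Fin n → ℝ) : ℝ := Real.sqrt (∑ i, v i ^ 2)

lemma vnorm'_eq {m : ℕ} (v : Fin m → ℝ) :
    vnorm' v = ‖(WithLp.equiv 2 (Fin m → ℝ)).symm v‖ := by
  rw [vnorm']
  rw [EuclideanSpace.norm_eq]
  congr 1
  refine Finset.sum_congr rfl fun i _ => ?_
  show v i ^ 2 = ‖v i‖ ^ 2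
  rw [Real.norm_eq_abs, sq_abs]

lemma vnorm'_nonneg {m : ℕ} (v : Fin m → ℝ) : 0 ≤ vnorm' v := Real.sqrt_nonneg _

lemma vnorm'_sub_le {m : ℕ} (v w : Fin m → ℝ) :
    vnorm' v - vnorm' w ≤ vnorm' (fun i => v i - w i) := by
  rw [vnorm'_eq, vnorm'_eq, vnorm'_eq]
  have h : (fun i => v i - w i) = v - w := rfl
  rw [h]
  have h2 : (WithLp.equiv 2 (Fin m → ℝ)).symm (v - w)
      = (WithLp.equiv 2 (Fin m → ℝ)).symm v - (WithLp.equiv 2 (Fin m → ℝ)).symm w := rfl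
  rw [h2]
  exact norm_sub_norm_le _ _

end Vnorm

section Emp
open Finset

variable {m n : ℕ} (p : Fin m → ℝ)

/-- the empirical deviation function -/
noncomputable def ff (a : Fin n → Fin m) : ℝ :=
  vnorm' (fun i => ((Finset.univ.filter fun j => a j = i).card : ℝ) / n - p i)

lemma cnt_real {n : ℕ} (a : Fin n → Fin m) (i : Fin m) :
    (((Finset.univ.filter fun j => a j = i).card : ℕ) : ℝ)
      = ∑ j, (if a j = i then (1:ℝ) else 0) := by
  rw [Finset.card_filter]
  push_cast
  rfl

lemma ff_osc (hn : 0 < n) (a : Fin n → Fin m) (j : Fin n) (i1 i2 : Fin m) :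
    ff p (Function.update a j i1) - ff p (Function.update a j i2) ≤ Real.sqrt 2 / n := by
  have hnR : (0:ℝ) < n := Nat.cast_pos.2 hn
  set v1 : Fin m → ℝ := fun i =>
    ((Finset.univ.filter fun j' => Function.update a j i1 j' = i).card : ℝ) / n - p i with hv1
  set v2 : Fin m → ℝ := fun i =>
    ((Finset.univ.filter fun j' => Function.update a j i2 j' = i).card : ℝ) / n - p i with hv2
  have hstep := vnorm'_sub_le v1 v2
  have hdiff : ∀ i, v1 i - v2 i
      = ((if i1 = i then (1:ℝ) else 0) - (if i2 = i then (1:ℝ) else 0)) / n := by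
    intro i
    rw [hv1, hv2]
    simp only
    have split : ∀ z : Fin m, ∑ j', (if Function.update a j z j' = i then (1:ℝ) else 0)
        = (if z = i then (1:ℝ) else 0) + ∑ j' ∈ Finset.univ.erase j, (if a j' = i then (1:ℝ) else 0) := by
      intro z
      rw [← Finset.add_sum_erase _ _ (Finset.mem_univ j)]
      congr 1
      · rw [Function.update_self]
      · refine Finset.sum_congr rfl fun j' hj' => ?_
        rw [Function.update_of_ne (Finset.ne_of_mem_erase hj')]
    rw [cnt_real, cnt_real, split, split]
    ring
  have hbound : vnorm' (fun i => v1 i - v2 i) ≤ Real.sqrt 2 / n := by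
    rw [vnorm']
    have hsum : ∑ i, (v1 i - v2 i) ^ 2 ≤ 2 / n ^ 2 := by
      have hpt : ∀ i, (v1 i - v2 i) ^ 2
          ≤ ((if i1 = i then (1:ℝ) else 0) + (if i2 = i then (1:ℝ) else 0)) / n ^ 2 := by
        intro i
        rw [hdiff i, div_pow]
        apply div_le_div_of_nonneg_right ?_ (by positivity)
        · split_ifs <;> norm_num
      calc ∑ i, (v1 i - v2 i) ^ 2
          ≤ ∑ i, ((if i1 = i then (1:ℝ) else 0) + (if i2 = i then (1:ℝ) else 0)) / n ^ 2 :=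
            Finset.sum_le_sum fun i _ => hpt i
        _ = ((∑ i, if i1 = i then (1:ℝ) else 0) + ∑ i, if i2 = i then (1:ℝ) else 0) / n ^ 2 := by
            rw [← Finset.sum_add_distrib, Finset.sum_div]
        _ ≤ 2 / n ^ 2 := by
            rw [Finset.sum_ite_eq, Finset.sum_ite_eq]
            simp only [Finset.mem_univ, if_pos]
            norm_num
    calc Real.sqrt (∑ i, (v1 i - v2 i) ^ 2) ≤ Real.sqrt (2 / n ^ 2) := Real.sqrt_le_sqrt hsum
      _ = Real.sqrt 2 / n := by
          rw [Real.sqrt_div (by norm_num : (0:ℝ) ≤ 2), Real.sqrt_sq hnR.le]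
  exact le_trans hstep hbound

variable (hp0 : ∀ i, 0 ≤ p i) (hp1 : ∑ i, p i = 1)

include hp0 hp1 in
lemma Ex_ff_sq_le (hn : 0 < n) :
    ∑ a : Fin n → Fin m, W p a * (ff p a) ^ 2 ≤ 1 / n := by
  have hnR : (0:ℝ) < n := Nat.cast_pos.2 hn
  -- ff² = sum of squares
  have hffsq : ∀ a : Fin n → Fin m, (ff p a) ^ 2
      = ∑ i, (((Finset.univ.filter fun j => a j = i).card : ℝ) / n - p i) ^ 2 := by
    intro a
    rw [ff, vnorm', Real.sq_sqrt (Finset.sum_nonneg fun i _ => sq_nonneg _)]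
  have swap : ∑ a : Fin n → Fin m, W p a * (ff p a) ^ 2
      = ∑ i, ∑ a : Fin n → Fin m,
          W p a * (((Finset.univ.filter fun j => a j = i).card : ℝ) / n - p i) ^ 2 := by
    rw [Finset.sum_congr rfl fun a _ => by rw [hffsq a, Finset.mul_sum]]
    exact Finset.sum_comm
  rw [swap]
  have term : ∀ i : Fin m, ∑ a : Fin n → Fin m,
      W p a * (((Finset.univ.filter fun j => a j = i).card : ℝ) / n - p i) ^ 2
        ≤ p i / n := by
    intro i
    set d : Fin m → ℝ := fun k => (if k = i then (1:ℝ) else 0) - p i with hd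
    have hcnt : ∀ a : Fin n → Fin m,
        ((Finset.univ.filter fun j => a j = i).card : ℝ) / n - p i
          = (∑ j, d (a j)) / n := by
      intro a
      rw [cnt_real]
      rw [hd]
      simp only
      rw [Finset.sum_sub_distrib]
      rw [Finset.sum_const, Finset.card_univ, Fintype.card_fin, nsmul_eq_mul]
      field_simp
    have hd0 : ∑ x, p x * d x = 0 := by
      rw [hd]
      simp only [mul_sub]
      rw [Finset.sum_sub_distrib]
      have e1 : ∑ x, p x * (if x = i then (1:ℝ) else 0) = p i := by
        rw [Finset.sum_congr rfl
          (fun x _ => by rw [mul_ite, mul_one, mul_zero] :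
            ∀ x ∈ univ, p x * (if x = i then (1:ℝ) else 0) = if x = i then p x else 0)]
        rw [Finset.sum_ite_eq']
        simp
      rw [e1, ← Finset.sum_mul, hp1, one_mul]
      ring
    have hdvar : ∑ x, p x * d x ^ 2 ≤ p i := by
      have e : ∀ x, p x * d x ^ 2
          = p x * (if x = i then (1:ℝ) else 0) - 2 * p i * (p x * (if x = i then (1:ℝ) else 0))
            + p i ^ 2 * p x := by
        intro x
        rw [hd]
        simp only
        split_ifs <;> ring
      rw [Finset.sum_congr rfl fun x _ => e x]
      rw [Finset.sum_add_distrib, Finset.sum_sub_distrib, ← Finset.mul_sum, ← Finset.mul_sum]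
      have e1 : ∑ x, p x * (if x = i then (1:ℝ) else 0) = p i := by
        rw [Finset.sum_congr rfl
          (fun x _ => by rw [mul_ite, mul_one, mul_zero] :
            ∀ x ∈ univ, p x * (if x = i then (1:ℝ) else 0) = if x = i then p x else 0)]
        rw [Finset.sum_ite_eq']
        simp
      rw [e1, hp1]
      nlinarith [hp0 i, sq_nonneg (p i)]
    calc ∑ a : Fin n → Fin m,
        W p a * (((Finset.univ.filter fun j => a j = i).card : ℝ) / n - p i) ^ 2
        = ∑ a : Fin n → Fin m, W p a * (∑ j, d (a j)) ^ 2 / n ^ 2 := by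
          refine Finset.sum_congr rfl fun a _ => ?_
          rw [hcnt a, div_pow]
          ring
      _ = (∑ a : Fin n → Fin m, W p a * (∑ j, d (a j)) ^ 2) / n ^ 2 := by
          rw [Finset.sum_div]
      _ = (n * (∑ x, p x * d x ^ 2)) / n ^ 2 := by rw [Ex_sq_sum p hp1 d hd0]
      _ ≤ (n * p i) / n ^ 2 := by
          have := mul_le_mul_of_nonneg_left hdvar (le_of_lt hnR)
          apply div_le_div_of_nonneg_right this (by positivity)
      _ = p i / n := by field_simp
  calc ∑ i, ∑ a : Fin n → Fin m,
      W p a * (((Finset.univ.filter fun j => a j = i).card : ℝ) / n - p i) ^ 2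
      ≤ ∑ i, p i / n := Finset.sum_le_sum fun i _ => term i
    _ = 1 / n := by rw [← Finset.sum_div, hp1]

include hp0 hp1 in
lemma Ex_ff_le (hn : 0 < n) :
    ∑ a : Fin n → Fin m, W p a * ff p a ≤ 1 / Real.sqrt n := by
  have hnR : (0:ℝ) < n := Nat.cast_pos.2 hn
  have hnonneg : 0 ≤ ∑ a : Fin n → Fin m, W p a * ff p a :=
    Finset.sum_nonneg fun a _ => mul_nonneg (W_nonneg p hp0 a) (vnorm'_nonneg _)
  have cs := Finset.sum_mul_sq_le_sq_mul_sq Finset.univ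
    (fun a : Fin n → Fin m => Real.sqrt (W p a))
    (fun a : Fin n → Fin m => Real.sqrt (W p a) * ff p a)
  have e1 : ∀ a : Fin n → Fin m,
      Real.sqrt (W p a) * (Real.sqrt (W p a) * ff p a) = W p a * ff p a := by
    intro a
    rw [← mul_assoc, Real.mul_self_sqrt (W_nonneg p hp0 a)]
  have e2 : ∀ a : Fin n → Fin m, Real.sqrt (W p a) ^ 2 = W p a :=
    fun a => Real.sq_sqrt (W_nonneg p hp0 a)
  have e3 : ∀ a : Fin n → Fin m,
      (Real.sqrt (W p a) * ff p a) ^ 2 = W p a * (ff p a) ^ 2 := by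
    intro a
    rw [mul_pow, e2 a]
  rw [Finset.sum_congr rfl fun a _ => e1 a, Finset.sum_congr rfl fun a _ => e2 a,
    Finset.sum_congr rfl fun a _ => e3 a, sum_W p hp1, one_mul] at cs
  have csq : (∑ a : Fin n → Fin m, W p a * ff p a) ^ 2 ≤ 1 / n :=
    le_trans cs (Ex_ff_sq_le p hp0 hp1 hn)
  calc ∑ a : Fin n → Fin m, W p a * ff p a
      = Real.sqrt ((∑ a : Fin n → Fin m, W p a * ff p a) ^ 2) :=
        (Real.sqrt_sq hnonneg).symm
    _ ≤ Real.sqrt (1 / n) := Real.sqrt_le_sqrt csq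
    _ = 1 / Real.sqrt n := by
        rw [Real.sqrt_div (by norm_num : (0:ℝ) ≤ 1)]
        simp

end Emp
end Stmt17

/-- Euclidean norm of a vector in `ℝ^n`. -/
noncomputable def vnorm {n : ℕ} (v : Fin n → ℝ) : ℝ := Real.sqrt (∑ i, v i ^ 2)

open MeasureTheory

/-- (Accuracy of empirical probabilities.) Fix `p ∈ Δ^{m−1}`.
Let `x_1,…,x_n` be i.i.d. random coordinate vectors (encoded by their index in `Fin m`)
with `Pr[x = e_i] = p_i`, and let `μ̂` be the empirical distribution.  Then for all
`t > 0`, `Pr[‖μ̂ − p‖₂ > (1+√t)/√n] ≤ e^{−t}`. -/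
theorem stmt_17 {m n : ℕ} (hn : 0 < n) {Ω : Type*} [MeasurableSpace Ω]
    (μ : Measure Ω) [IsProbabilityMeasure μ]
    (p : Fin m → ℝ) (hp0 : ∀ i, 0 ≤ p i) (hp1 : ∑ i, p i = 1)
    (x : Fin n → Ω → Fin m) (hmeas : ∀ j, Measurable (x j))
    (hindep : ProbabilityTheory.iIndepFun x μ)
    (hdist : ∀ j i, (μ {ω | x j ω = i}).toReal = p i) :
    ∀ t : ℝ, 0 < t →
      (μ {ω | (1 + Real.sqrt t) / Real.sqrt n <
        vnorm (fun i => ((Finset.univ.filter fun j => x j ω = i).card : ℝ) / n - p i)}).toReal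
        ≤ Real.exp (-t) := by
  intro t ht
  have hnR : (0:ℝ) < n := Nat.cast_pos.2 hn
  have hsn : 0 < Real.sqrt n := Real.sqrt_pos.2 hnR
  have hst : 0 ≤ Real.sqrt t := Real.sqrt_nonneg t
  set c : ℝ := (1 + Real.sqrt t) / Real.sqrt n with hc
  set f : (Fin n → Fin m) → ℝ := Stmt17.ff p with hf
  set S : Finset (Fin n → Fin m) := Finset.univ.filter (fun a => c < f a) with hS
  set T : (Fin n → Fin m) → Set Ω := fun a => ⋂ j, x j ⁻¹' {a j} with hT
  have hA : {ω | c < vnorm (fun i =>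
        ((Finset.univ.filter fun j => x j ω = i).card : ℝ) / n - p i)}
      = ⋃ a ∈ S, T a := by
    ext ω
    simp only [Set.mem_setOf_eq, Set.mem_iUnion, hS, Finset.mem_filter, Finset.mem_univ, true_and,
      hT, Set.mem_iInter, Set.mem_preimage, Set.mem_singleton_iff]
    constructor
    · intro h
      exact ⟨fun j => x j ω, h, fun j => rfl⟩
    · rintro ⟨a, ha, hxa⟩
      have he : (fun j => x j ω) = a := funext hxa
      have : c < f (fun j => x j ω) := by rw [he]; exact ha
      exact this
  have hTmeas : ∀ a, MeasurableSet (T a) := fun a =>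
    MeasurableSet.iInter fun j => hmeas j (measurableSet_singleton (a j))
  have hdisj : (↑S : Set (Fin n → Fin m)).PairwiseDisjoint T := by
    intro a _ b _ hab
    refine Set.disjoint_left.2 fun ω hωa hωb => hab ?_
    rw [hT] at hωa hωb
    simp only [Set.mem_iInter, Set.mem_preimage, Set.mem_singleton_iff] at hωa hωb
    exact funext fun j => (hωa j).symm.trans (hωb j)
  have hμT : ∀ a ∈ S, (μ (T a)).toReal = Stmt17.W p a := by
    intro a _
    rw [hT]
    simp only
    rw [hindep.meas_iInter (fun j => ⟨{a j}, measurableSet_singleton (a j), rfl⟩)]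
    rw [ENNReal.toReal_prod]
    refine Finset.prod_congr rfl fun j _ => ?_
    have he : x j ⁻¹' {a j} = {ω | x j ω = a j} := rfl
    rw [he, hdist j (a j)]
  have hmeasure : (μ (⋃ a ∈ S, T a)).toReal = ∑ a ∈ S, Stmt17.W p a := by
    rw [measure_biUnion_finset hdisj (fun a _ => hTmeas a),
      ENNReal.toReal_sum (fun a _ => measure_ne_top μ _)]
    exact Finset.sum_congr rfl hμT
  rw [hA, hmeasure]
  set B : ℝ := Real.sqrt 2 / n with hB
  set lam : ℝ := 2 * Real.sqrt t * Real.sqrt n with hlam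
  have hlam0 : 0 ≤ lam := by positivity
  have hosc : ∀ (a : Fin n → Fin m) (j : Fin n) (i1 i2 : Fin m),
      f (Function.update a j i1) - f (Function.update a j i2) ≤ B := fun a j i1 i2 =>
    Stmt17.ff_osc p hn a j i1 i2
  have hch := Stmt17.chernoff p hp0 hp1 B lam c hlam0 n f hosc
  rw [← hS] at hch
  refine le_trans hch ?_
  apply Real.exp_le_exp.2
  have hEx := Stmt17.Ex_ff_le p hp0 hp1 hn
  have ht2 : Real.sqrt t ^ 2 = t := Real.sq_sqrt ht.le
  have hn2 : Real.sqrt n ^ 2 = n := Real.sq_sqrt hnR.le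
  have h22 : Real.sqrt 2 ^ 2 = 2 := Real.sq_sqrt (by norm_num)
  have hterm1 : lam * ((∑ a : Fin n → Fin m, Stmt17.W p a * f a) - c) ≤ -(2*t) := by
    have hsplit : c = 1/Real.sqrt n + Real.sqrt t/Real.sqrt n := by
      rw [hc]; ring
    have hdiff : (∑ a : Fin n → Fin m, Stmt17.W p a * f a) - c
        ≤ -(Real.sqrt t / Real.sqrt n) := by
      rw [hsplit]
      have := hEx
      rw [← hf] at this
      linarith
    calc lam * ((∑ a : Fin n → Fin m, Stmt17.W p a * f a) - c)
        ≤ lam * (-(Real.sqrt t / Real.sqrt n)) := mul_le_mul_of_nonneg_left hdiff hlam0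
      _ = -(2*t) := by
          rw [hlam]
          field_simp
          linear_combination (-1 : ℝ) * ht2
  have hterm2 : (n:ℝ) * (lam^2 * B^2/8) = t := by
    have hl2 : lam^2 = 4 * t * n := by
      rw [hlam, mul_pow, mul_pow, ht2, hn2]
      norm_num
    have hB2 : B^2 = 2 / (n:ℝ)^2 := by
      rw [hB, div_pow, h22]
    rw [hl2, hB2]
    field_simp
    ring
  linarith
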